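/- Let A be the integer matrix [[1,2],[3,0]] (arising from the substitution a ↦ abb, b ↦ aaa) and let G := {v ∈ ℚ² : Aⁿ v ∈ ℤ² for some n ∈ ℕ}. Then G = {a·(1,1) + b·(−2,3) + c·(1,0) : a ∈ ℤ[1/3], b ∈ ℤ[1/2], c ∈ ℤ}. Moreover, the subgroup {a·(1,1) + b·(−2,3) : a ∈ ℤ[1/3], b ∈ ℤ[1/2]} has index 5 in G. -/

import Mathlib

namespace Stmt11

instance : Fact (Nat.Prime 5) := ⟨by norm_num⟩

noncomputable abbrev A : Matrix (Fin 2) (Fin 2) ℚ := !![1, 2; 3, 0]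

def SG : Set (Fin 2 → ℚ) :=
  {v | ∃ a b : ℚ, ∃ c : ℤ, (∃ (k : ℤ) (m : ℕ), a = (k : ℚ) / 3 ^ m) ∧
    (∃ (k : ℤ) (m : ℕ), b = (k : ℚ) / 2 ^ m) ∧
    v = a • ![1, 1] + b • ![-2, 3] + (c : ℚ) • ![1, 0]}

def SH : Set (Fin 2 → ℚ) :=
  {v | ∃ a b : ℚ, (∃ (k : ℤ) (m : ℕ), a = (k : ℚ) / 3 ^ m) ∧
    (∃ (k : ℤ) (m : ℕ), b = (k : ℚ) / 2 ^ m) ∧ v = a • ![1, 1] + b • ![-2, 3]}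

lemma step (a b : ℚ) : A.mulVec (a • ![1,1] + b • ![-2,3]) = (3*a) • ![1,1] + ((-2)*b) • ![-2,3] := by
  funext i
  fin_cases i <;>
    simp [Matrix.mulVec, dotProduct, Fin.sum_univ_two] <;> ring

lemma eig (n : ℕ) (a b : ℚ) : (A^n).mulVec (a • ![1,1] + b • ![-2,3])
    = (3^n*a) • ![1,1] + ((-2)^n*b) • ![-2,3] := by
  induction n with
  | zero => simp
  | succ n ih =>
    rw [pow_succ', ← Matrix.mulVec_mulVec, ih, step]
    ring_nf

lemma intvec (n : ℕ) : ∃ z0 z1 : ℤ, (A^n).mulVec ![1,0] = ![(z0 : ℚ), (z1 : ℚ)] := by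
  induction n with
  | zero => exact ⟨1, 0, by simp⟩
  | succ n ih =>
    obtain ⟨z0, z1, h⟩ := ih
    refine ⟨z0 + 2*z1, 3*z0, ?_⟩
    rw [pow_succ', ← Matrix.mulVec_mulVec, h]
    funext i
    fin_cases i <;>
      simp [Matrix.mulVec, dotProduct, Fin.sum_univ_two] <;> push_cast <;> ring

lemma decomp (v : Fin 2 → ℚ) :
    v = ((3*v 0 + 2*v 1)/5) • ![1,1] + ((v 1 - v 0)/5) • ![-2,3] := by
  funext i
  fin_cases i <;> simp <;> ring

lemma fwd (a b : ℚ) (c k l : ℤ) (m p : ℕ) (ha : a = (k:ℚ)/3^m) (hb : b = (l:ℚ)/2^p) :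
    ∃ n : ℕ, ∀ i, ∃ z : ℤ,
      (A^n).mulVec (a • ![1,1] + b • ![-2,3] + (c:ℚ) • ![1,0]) i = (z:ℚ) := by
  obtain ⟨u0, u1, hu⟩ := intvec (m + p)
  refine ⟨m + p, ?_⟩
  have hmv : (A^(m+p)).mulVec (a • ![1,1] + b • ![-2,3] + (c:ℚ) • ![1,0])
      = (3^(m+p)*a) • ![1,1] + ((-2)^(m+p)*b) • ![-2,3] + (c:ℚ) • ![(u0:ℚ), u1] := by
    rw [Matrix.mulVec_add, Matrix.mulVec_smul, eig, hu]
  have ha' : (3:ℚ)^(m+p) * a = ((k * 3^p : ℤ) : ℚ) := by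
    rw [ha, pow_add]; push_cast; field_simp
  have hb' : ((-2):ℚ)^(m+p) * b = ((l * (-1)^(m+p) * 2^m : ℤ) : ℚ) := by
    rw [hb, neg_pow, pow_add]; push_cast; field_simp; ring
  rw [ha', hb'] at hmv
  intro i
  fin_cases i
  · refine ⟨k * 3^p - 2 * (l * (-1)^(m+p) * 2^m) + c * u0, ?_⟩
    rw [hmv]
    simp only [Fin.mk_zero, Pi.add_apply, Pi.smul_apply, Matrix.cons_val_zero, smul_eq_mul]
    push_cast; ring
  · refine ⟨k * 3^p + 3 * (l * (-1)^(m+p) * 2^m) + c * u1, ?_⟩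
    rw [hmv]
    simp only [Fin.mk_one, Pi.add_apply, Pi.smul_apply, Matrix.cons_val_one,
      Matrix.head_cons, smul_eq_mul]
    push_cast; ring
lemma bwd (v : Fin 2 → ℚ) (n : ℕ) (z0 z1 : ℤ)
    (h0 : (A^n).mulVec v 0 = (z0:ℚ)) (h1 : (A^n).mulVec v 1 = (z1:ℚ)) :
    ∃ a b : ℚ, ∃ c : ℤ, (∃ (k : ℤ) (m : ℕ), a = (k : ℚ) / 3 ^ m) ∧
      (∃ (k : ℤ) (m : ℕ), b = (k : ℚ) / 2 ^ m) ∧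
      v = a • ![1, 1] + b • ![-2, 3] + (c : ℚ) • ![1, 0] := by
  set x := v 0 with hx
  set y := v 1 with hy
  -- eigen-coordinates
  have hmv : (A^n).mulVec v
      = (3^n*((3*x+2*y)/5)) • ![1,1] + ((-2)^n*((y-x)/5)) • ![-2,3] := by
    conv_lhs => rw [decomp v, eig]
  have E0 : 3^n*((3*x+2*y)/5) + (-2)^n*((y-x)/5) * (-2) = (z0:ℚ) := by
    have := congrFun hmv 0
    simpa [smul_eq_mul] using (this.symm.trans h0)
  have E1 : 3^n*((3*x+2*y)/5) + (-2)^n*((y-x)/5) * 3 = (z1:ℚ) := by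
    have := congrFun hmv 1
    simpa [smul_eq_mul] using (this.symm.trans h1)
  -- integers
  set e : ℤ := (-1)^n with he_def
  have he : e * e = 1 := by
    rw [he_def, ← pow_add]
    exact Even.neg_one_pow ⟨n, rfl⟩
  set s : ℤ := e * (z1 - z0) with hs_def
  set t : ℤ := 3*z0 + 2*z1 with ht_def
  -- rational eigen facts
  have heq : ((-2):ℚ)^n = (e:ℚ) * 2^n := by
    rw [he_def]; push_cast; rw [neg_pow]
  have heQ : ((e:ℚ)) * e = 1 := by exact_mod_cast congrArg (Int.cast : ℤ → ℚ) he
  have F1 : (3:ℚ)^n*(3*x+2*y) = (t:ℚ) := by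
    push_cast [ht_def]
    linear_combination 3*E0 + 2*E1
  have F2 : (2:ℚ)^n*(y-x) = (s:ℚ) := by
    push_cast [hs_def]
    rw [heq] at E0 E1
    linear_combination (e:ℚ)*E1 - (e:ℚ)*E0 - ((2:ℚ)^n*(y-x))*heQ
  -- divisibilities
  obtain ⟨d, hd⟩ : (5:ℤ) ∣ 2^n - e*3^n := by
    have h1 : (2:ℤ) ≡ -3 [ZMOD 5] := by decide
    have h2 := h1.pow n
    have := h2.dvd
    rwa [show ((-3:ℤ))^n = e*3^n by rw [he_def, neg_pow], ← neg_sub, dvd_neg] at this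
  obtain ⟨u, hu⟩ : (5:ℤ) ∣ 8^n*2^n - 1 := by
    have h1 : (16:ℤ) ≡ 1 [ZMOD 5] := by decide
    have h2 := h1.pow n
    have := h2.dvd
    rwa [show ((1:ℤ))^n = 1 from one_pow n, ← neg_sub, dvd_neg,
      show (16:ℤ) = 8*2 by norm_num, mul_pow] at this
  set c : ℤ := -s * 8^n with hc_def
  have hw : t*2^n + 3*3^n*s = 5*(d*t + e*3^n*z1) := by
    rw [hs_def, ht_def]
    linear_combination (3*z0+2*z1)*hd
  obtain ⟨ka, hka⟩ : ∃ ka : ℤ, 5*ka = t - 3*3^n*c := by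
    refine ⟨8^n*(d*t + e*3^n*z1) - t*u, ?_⟩
    rw [hc_def]
    linear_combination (-(8:ℤ)^n*t)*hd + t*hu
  obtain ⟨kb, hkb⟩ : ∃ kb : ℤ, 5*kb = s + 2^n*c := by
    refine ⟨-s*u, ?_⟩
    rw [hc_def]
    linear_combination s*hu
  have P0 : (3:ℚ)^n ≠ 0 := by positivity
  have Q0 : (2:ℚ)^n ≠ 0 := by positivity
  have hkaQ : 5*(ka:ℚ) = t - 3*3^n*c := by exact_mod_cast congrArg (Int.cast : ℤ → ℚ) hka
  have hkbQ : 5*(kb:ℚ) = s + 2^n*c := by exact_mod_cast congrArg (Int.cast : ℤ → ℚ) hkb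
  have ha2 : (ka:ℚ)/3^n = (3*x+2*y - 3*(c:ℚ))/5 := by
    rw [div_eq_div_iff P0 (by norm_num)]
    linear_combination hkaQ - F1
  have hb2 : (kb:ℚ)/2^n = (y - x + (c:ℚ))/5 := by
    rw [div_eq_div_iff Q0 (by norm_num)]
    linear_combination hkbQ - F2
  refine ⟨(ka:ℚ)/3^n, (kb:ℚ)/2^n, c, ⟨ka, n, rfl⟩, ⟨kb, n, rfl⟩, ?_⟩
  funext i
  fin_cases i
  · simp only [Fin.mk_zero, Pi.add_apply, Pi.smul_apply, Matrix.cons_val_zero, smul_eq_mul]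
    rw [← hx, ha2, hb2]
    ring
  · simp only [Fin.mk_one, Pi.add_apply, Pi.smul_apply, Matrix.cons_val_one,
      Matrix.head_cons, smul_eq_mul, Matrix.cons_val_zero]
    rw [← hy, ha2, hb2]
    ring
lemma den_ne (k : ℤ) (p : ℕ) : ((((k:ℚ)/2^p).den : ZMod 5)) ≠ 0 := by
  intro h
  have h5 : (5:ℕ) ∣ ((k:ℚ)/2^p).den := (ZMod.natCast_eq_zero_iff _ _).1 h
  have hdvd : ((((k:ℚ)/2^p).den : ℤ)) ∣ (2^p : ℤ) := by
    have h1 := Rat.den_dvd k (2^p)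
    rwa [Rat.divInt_eq_div, show (((2:ℤ)^p : ℤ) : ℚ) = (2:ℚ)^p by push_cast; ring] at h1
  have h52 : (5:ℤ) ∣ (2:ℤ)^p := dvd_trans (by exact_mod_cast Int.natCast_dvd_natCast.2 h5) hdvd
  have := Int.Prime.dvd_pow' (by norm_num) h52
  norm_num at this

lemma cast_key (k : ℤ) (p : ℕ) :
    (((k:ℚ)/2^p : ℚ) : ZMod 5) * (2:ZMod 5)^p = ((k : ZMod 5)) := by
  have hq : ((k:ℚ)/2^p) * (((2^p : ℕ) : ℚ)) = ((k:ℚ)) := by push_cast; field_simp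
  have h1 : ((((k:ℚ)/2^p) * (((2^p:ℕ)):ℚ) : ℚ) : ZMod 5)
      = (((k:ℚ)/2^p : ℚ) : ZMod 5) * (((((2^p:ℕ)):ℚ) : ℚ) : ZMod 5) :=
    Rat.cast_mul_of_ne_zero (den_ne k p) (by rw [Rat.den_natCast]; simp)
  rw [hq, Rat.cast_intCast, Rat.cast_natCast] at h1
  rw [h1]; push_cast; ring

lemma two_pow_ne (p : ℕ) : ((2:ZMod 5))^p ≠ 0 := pow_ne_zero _ (by decide)

lemma coords {v : Fin 2 → ℚ} {a b c : ℚ}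
    (hv : v = a • ![1, 1] + b • ![-2, 3] + c • ![1, 0]) :
    v 0 = a - 2*b + c ∧ v 1 = a + 3*b := by
  rw [hv]
  constructor <;>
    simp only [Pi.add_apply, Pi.smul_apply, Matrix.cons_val_zero, Matrix.cons_val_one,
      Matrix.head_cons, smul_eq_mul] <;> ring

lemma diff_G {v : Fin 2 → ℚ} (hv : v ∈ SG) :
    ∃ (k : ℤ) (p : ℕ), v 1 - v 0 = (k:ℚ)/2^p := by
  obtain ⟨a, b, c, _, ⟨l, p, hb⟩, hveq⟩ := hv
  obtain ⟨h0, h1⟩ := coords hveq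
  refine ⟨5*l - c*2^p, p, ?_⟩
  rw [h0, h1, hb]
  push_cast
  field_simp
  ring

lemma part2 (G H : AddSubgroup (Fin 2 → ℚ)) (hG : (G : Set (Fin 2 → ℚ)) = SG)
    (hH : (H : Set (Fin 2 → ℚ)) = SH) : H.relIndex G = 5 := by
  have memG : ∀ v : Fin 2 → ℚ, v ∈ G ↔ v ∈ SG := fun v => by
    rw [← SetLike.mem_coe, hG]
  have memH : ∀ v : Fin 2 → ℚ, v ∈ H ↔ v ∈ SH := fun v => by
    rw [← SetLike.mem_coe, hH]
  have hadd : ∀ v w : G, (((((v:Fin 2 → ℚ)+(w:Fin 2 → ℚ)) 1 - ((v:Fin 2 → ℚ)+(w:Fin 2 → ℚ)) 0 : ℚ)) : ZMod 5)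
      = (((v:Fin 2 → ℚ) 1 - (v:Fin 2 → ℚ) 0 : ℚ) : ZMod 5)
        + (((w:Fin 2 → ℚ) 1 - (w:Fin 2 → ℚ) 0 : ℚ) : ZMod 5) := by
    intro v w
    obtain ⟨k, p, hk⟩ := diff_G ((memG _).1 v.2)
    obtain ⟨k', p', hk'⟩ := diff_G ((memG _).1 w.2)
    have hsplit : ((v:Fin 2 → ℚ)+(w:Fin 2 → ℚ)) 1 - ((v:Fin 2 → ℚ)+(w:Fin 2 → ℚ)) 0
        = ((v:Fin 2 → ℚ) 1 - (v:Fin 2 → ℚ) 0) + ((w:Fin 2 → ℚ) 1 - (w:Fin 2 → ℚ) 0) := by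
      simp only [Pi.add_apply]; ring
    rw [hsplit]
    exact Rat.cast_add_of_ne_zero (by rw [hk]; exact den_ne k p) (by rw [hk']; exact den_ne k' p')
  let φ : G →+ ZMod 5 := AddMonoidHom.mk'
    (fun v => (((v:Fin 2 → ℚ) 1 - (v:Fin 2 → ℚ) 0 : ℚ) : ZMod 5)) (fun v w => hadd v w)
  have hφ : ∀ v : G, φ v = (((v:Fin 2 → ℚ) 1 - (v:Fin 2 → ℚ) 0 : ℚ) : ZMod 5) := fun _ => rfl
  have hker : H.addSubgroupOf G = φ.ker := by
    ext v
    rw [AddSubgroup.mem_addSubgroupOf, AddMonoidHom.mem_ker, hφ]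
    constructor
    · intro hvH
      obtain ⟨a, b, ⟨k, m, ha⟩, ⟨l, p, hb⟩, hveq⟩ := (memH _).1 hvH
      have hco : (v:Fin 2 → ℚ) 1 - (v:Fin 2 → ℚ) 0 = ((5*l : ℤ):ℚ)/2^p := by
        have hc := coords (v := (v:Fin 2 → ℚ)) (a := a) (b := b) (c := 0) (by rw [hveq]; simp)
        rw [hc.1, hc.2, hb]; push_cast; ring
      rw [hco]
      have := cast_key (5*l) p
      have h5 : ((5*l : ℤ) : ZMod 5) = 0 := by
        rw [ZMod.intCast_zmod_eq_zero_iff_dvd]; exact ⟨l, by push_cast; ring⟩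
      rw [h5] at this
      exact (mul_eq_zero.1 this).resolve_right (two_pow_ne p)
    · intro h0
      obtain ⟨a, b, c, ⟨k, m, ha⟩, ⟨l, p, hb⟩, hveq⟩ := (memG _).1 v.2
      obtain ⟨hc0, hc1⟩ := coords hveq
      have hco : (v:Fin 2 → ℚ) 1 - (v:Fin 2 → ℚ) 0 = ((5*l - c*2^p : ℤ):ℚ)/2^p := by
        rw [hc0, hc1, hb]; push_cast; field_simp; ring
      rw [hco] at h0
      have hck := cast_key (5*l - c*2^p) p
      rw [h0, zero_mul] at hck
      have h5l : ((5*l : ℤ) : ZMod 5) = 0 := by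
        rw [ZMod.intCast_zmod_eq_zero_iff_dvd]; exact ⟨l, by push_cast; ring⟩
      have hc2 : ((c : ZMod 5)) * (2:ZMod 5)^p = 0 := by
        have : ((5*l - c*2^p : ℤ) : ZMod 5) = ((5*l:ℤ) : ZMod 5) - (c : ZMod 5) * (2:ZMod 5)^p := by
          push_cast; ring
        rw [this, h5l, zero_sub] at hck
        exact neg_eq_zero.1 hck.symm
      have hc5 : ((c : ZMod 5)) = 0 := (mul_eq_zero.1 hc2).resolve_right (two_pow_ne p)
      obtain ⟨c', hc'⟩ := (ZMod.intCast_zmod_eq_zero_iff_dvd _ _).1 hc5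
      rw [memH]
      refine ⟨a + 3*(c':ℚ), b - (c':ℚ), ⟨k + 3*c'*3^m, m, ?_⟩, ⟨l - c'*2^p, p, ?_⟩, ?_⟩
      · rw [ha]; push_cast; field_simp
      · rw [hb]; push_cast; field_simp
      · funext i
        have hcc : (c : ℚ) = 5*(c' : ℚ) := by exact_mod_cast congrArg (Int.cast : ℤ → ℚ) hc'
        fin_cases i
        · simp only [Fin.mk_zero, Pi.add_apply, Pi.smul_apply, Matrix.cons_val_zero, smul_eq_mul]
          rw [hc0, hcc]; ring
        · simp only [Fin.mk_one, Pi.add_apply, Pi.smul_apply, Matrix.cons_val_one,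
            Matrix.head_cons, smul_eq_mul, Matrix.cons_val_zero]
          rw [hc1]; ring
  have hsurj : Function.Surjective φ := by
    intro t
    have hmem : (((-(t.val:ℤ)):ℚ)) • ![1,0] ∈ G := by
      rw [memG]
      exact ⟨0, 0, -(t.val:ℤ), ⟨0, 0, by norm_num⟩, ⟨0, 0, by norm_num⟩, by
        push_cast; simp⟩
    refine ⟨⟨_, hmem⟩, ?_⟩
    rw [hφ]
    have h1 : ((((-(t.val:ℤ)):ℚ)) • ![(1:ℚ),0]) 1 - ((((-(t.val:ℤ)):ℚ)) • ![(1:ℚ),0]) 0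
        = ((t.val : ℤ) : ℚ) := by
      simp only [Pi.smul_apply, Matrix.cons_val_one, Matrix.head_cons, Matrix.cons_val_zero,
        smul_eq_mul]
      push_cast; ring
    rw [h1, Rat.cast_intCast]
    push_cast
    exact ZMod.natCast_rightInverse t
  have : H.relIndex G = (H.addSubgroupOf G).index := rfl
  rw [this, hker, AddSubgroup.index_ker φ, AddMonoidHom.range_eq_top_of_surjective φ hsurj]
  rw [AddSubgroup.card_top, Nat.card_zmod]

end Stmt11

/-- Let `A = [[1,2],[3,0]]` (substitution `a ↦ abb`, `b ↦ aaa`) and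
`G = {v ∈ ℚ² : Aⁿ v ∈ ℤ² for some n}`.  Then
`G = {a·(1,1) + b·(−2,3) + c·(1,0) : a ∈ ℤ[1/3], b ∈ ℤ[1/2], c ∈ ℤ}`, and the subgroup
`{a·(1,1) + b·(−2,3) : a ∈ ℤ[1/3], b ∈ ℤ[1/2]}` has index `5` in `G`. -/
theorem stmt11 (G H : AddSubgroup (Fin 2 → ℚ))
    (hG : (G : Set (Fin 2 → ℚ)) =
      {v | ∃ n : ℕ, ∀ i, ∃ z : ℤ, ((!![(1 : ℚ), 2; 3, 0]) ^ n).mulVec v i = (z : ℚ)})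
    (hH : (H : Set (Fin 2 → ℚ)) =
      {v | ∃ a b : ℚ, (∃ (k : ℤ) (m : ℕ), a = (k : ℚ) / 3 ^ m) ∧
        (∃ (k : ℤ) (m : ℕ), b = (k : ℚ) / 2 ^ m) ∧ v = a • ![1, 1] + b • ![-2, 3]}) :
    (G : Set (Fin 2 → ℚ)) =
      {v | ∃ a b : ℚ, ∃ c : ℤ, (∃ (k : ℤ) (m : ℕ), a = (k : ℚ) / 3 ^ m) ∧
        (∃ (k : ℤ) (m : ℕ), b = (k : ℚ) / 2 ^ m) ∧
        v = a • ![1, 1] + b • ![-2, 3] + (c : ℚ) • ![1, 0]} ∧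
    H.relIndex G = 5 := by
  have hset : (G : Set (Fin 2 → ℚ)) = Stmt11.SG := by
    rw [hG]
    ext v
    constructor
    · rintro ⟨n, hz⟩
      obtain ⟨z0, h0⟩ := hz 0
      obtain ⟨z1, h1⟩ := hz 1
      exact Stmt11.bwd v n z0 z1 h0 h1
    · rintro ⟨a, b, c, ⟨k, m, ha⟩, ⟨l, p, hb⟩, hv⟩
      obtain ⟨n, hn⟩ := Stmt11.fwd a b c k l m p ha hb
      refine ⟨n, ?_⟩
      rw [hv]
      exact hn
  exact ⟨hset, Stmt11.part2 G H hset hH⟩
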